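/- Let D and D̂ be n×n real diagonal matrices with strictly positive diagonal entries, let A and be symmetric n×n real matrices with nonnegative entries such that D − A and D̂ − are positive definite, and let ε ≥ 0 and 0 ≤ λ ≤ 1 be reals. Suppose D ≈_ε D̂, (D̂ − Â) ≈_ε (D − A·D⁻¹·A), and D^{-1/2}·A·D^{-1/2} ⪯ (1−λ)·I. Then (1 − exp(2ε))·I ⪯ D̂^{-1/2}·Â·D̂^{-1/2} ⪯ (1 − (1 − (1−λ)²)·exp(−2ε))·I; equivalently, all eigenvalues of D̂⁻¹·Â lie between 1 − exp(2ε) and 1 − (1 − (1−λ)²)·exp(−2ε). -/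

import Mathlib

open Matrix

/-- `X ≈_ε Y` : both `exp(ε) • X - Y` and `Y - exp(-ε) • X` are positive semidefinite. -/
def MApprox {n : ℕ} (ε : ℝ) (X Y : Matrix (Fin n) (Fin n) ℝ) : Prop :=
  (Real.exp ε • X - Y).PosSemidef ∧ (Y - Real.exp (-ε) • X).PosSemidef

section Aux

variable {n : ℕ}

lemma psd_smul {c : ℝ} (hc : 0 ≤ c) {M : Matrix (Fin n) (Fin n) ℝ} (hM : M.PosSemidef) :
    (c • M).PosSemidef := by
  refine posSemidef_iff_dotProduct_mulVec.mpr ⟨?_, ?_⟩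
  · unfold Matrix.IsHermitian
    rw [Matrix.conjTranspose_smul, hM.1.eq, star_trivial]
  · intro x
    rw [Matrix.smul_mulVec, dotProduct_smul, smul_eq_mul]
    exact mul_nonneg hc (hM.dotProduct_mulVec_nonneg x)

lemma neg_psd {B : Matrix (Fin n) (Fin n) ℝ} (hB : Bᵀ = B) (hBnn : ∀ i j, 0 ≤ B i j)
    {t : ℝ} (h1 : (t • (1 : Matrix (Fin n) (Fin n) ℝ) - B).PosSemidef) :
    (t • (1 : Matrix (Fin n) (Fin n) ℝ) + B).PosSemidef := by
  have hBh : B.IsHermitian := hB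
  refine posSemidef_iff_dotProduct_mulVec.mpr ⟨?_, ?_⟩
  · unfold Matrix.IsHermitian
    rw [conjTranspose_add, conjTranspose_smul, conjTranspose_one, star_trivial, hBh.eq]
  · intro x
    rw [star_trivial, add_mulVec, smul_mulVec, one_mulVec, dotProduct_add,
      dotProduct_smul, smul_eq_mul]
    set y : Fin n → ℝ := fun i => |x i| with hy
    have hyy : y ⬝ᵥ y = x ⬝ᵥ x := by
      simp [dotProduct, hy, abs_mul_abs_self]
    have h1y : 0 ≤ t * (y ⬝ᵥ y) - y ⬝ᵥ B *ᵥ y := by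
      have := h1.dotProduct_mulVec_nonneg y
      rwa [star_trivial, sub_mulVec, smul_mulVec, one_mulVec, dotProduct_sub,
        dotProduct_smul, smul_eq_mul] at this
    have hxy : -(y ⬝ᵥ B *ᵥ y) ≤ x ⬝ᵥ B *ᵥ x := by
      have e1 : x ⬝ᵥ B *ᵥ x = ∑ i, ∑ j, x i * (B i j * x j) := by
        simp [dotProduct, Matrix.mulVec, Finset.mul_sum]
      have e2 : -(y ⬝ᵥ B *ᵥ y) = ∑ i, ∑ j, -(y i * (B i j * y j)) := by
        simp [dotProduct, Matrix.mulVec, Finset.mul_sum]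
      rw [e1, e2]
      refine Finset.sum_le_sum fun i _ => Finset.sum_le_sum fun j _ => ?_
      have habs : |x i * (B i j * x j)| = y i * (B i j * y j) := by
        rw [abs_mul, abs_mul, abs_of_nonneg (hBnn i j)]
        try ring
      calc -(y i * (B i j * y j)) = -|x i * (B i j * x j)| := by rw [habs]
        _ ≤ x i * (B i j * x j) := neg_abs_le _
    rw [hyy] at h1y
    linarith

lemma arith_aux {t a b c e : ℝ} (ht : 0 ≤ t)
    (I1 : t^2*c + 2*t*b + e ≤ t*(t^2*a + 2*t*c + b))
    (I2 : -(t*(t^2*a - 2*t*c + b)) ≤ t^2*c - 2*t*b + e)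
    (I3 : c + 2*b + e ≤ t*(a + 2*c + b))
    (I4 : -(t*a) ≤ c) (I5 : -(t*b) ≤ e) : 0 ≤ t^2*a - b := by
  rcases eq_or_lt_of_le ht with h | h
  · subst h
    nlinarith
  · have h0 : t * 0 ≤ t * (t^2*a - b) := by nlinarith
    have := le_of_mul_le_mul_left h0 h
    linarith

lemma sq_psd {B : Matrix (Fin n) (Fin n) ℝ} (hB : Bᵀ = B) {t : ℝ} (ht : 0 ≤ t)
    (h1 : (t • (1 : Matrix (Fin n) (Fin n) ℝ) - B).PosSemidef)
    (h2 : (t • (1 : Matrix (Fin n) (Fin n) ℝ) + B).PosSemidef) :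
    ((t ^ 2) • (1 : Matrix (Fin n) (Fin n) ℝ) - B * B).PosSemidef := by
  have hBh : B.IsHermitian := hB
  have hsymm : ∀ v w : Fin n → ℝ, v ⬝ᵥ B *ᵥ w = w ⬝ᵥ B *ᵥ v := fun v w => by
    rw [dotProduct_mulVec, ← Matrix.mulVec_transpose, hB, dotProduct_comm]
  have hQ1 : ∀ v : Fin n → ℝ, v ⬝ᵥ B *ᵥ v ≤ t * (v ⬝ᵥ v) := by
    intro v
    have := h1.dotProduct_mulVec_nonneg v
    rw [star_trivial, sub_mulVec, smul_mulVec, one_mulVec, dotProduct_sub,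
      dotProduct_smul, smul_eq_mul] at this
    linarith
  have hQ2 : ∀ v : Fin n → ℝ, -(t * (v ⬝ᵥ v)) ≤ v ⬝ᵥ B *ᵥ v := by
    intro v
    have := h2.dotProduct_mulVec_nonneg v
    rw [star_trivial, add_mulVec, smul_mulVec, one_mulVec, dotProduct_add,
      dotProduct_smul, smul_eq_mul] at this
    linarith
  refine posSemidef_iff_dotProduct_mulVec.mpr ⟨?_, ?_⟩
  · unfold Matrix.IsHermitian
    rw [conjTranspose_sub, conjTranspose_smul, conjTranspose_one, star_trivial,
      conjTranspose_mul, hBh.eq]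
  · intro x
    rw [star_trivial, sub_mulVec, smul_mulVec, one_mulVec, dotProduct_sub,
      dotProduct_smul, smul_eq_mul, ← Matrix.mulVec_mulVec]
    have hcross : x ⬝ᵥ B *ᵥ (B *ᵥ x) = (B *ᵥ x) ⬝ᵥ (B *ᵥ x) := hsymm x (B *ᵥ x)
    rw [hcross]
    have hexpB : ∀ s s' : ℝ, (s • x + s' • (B *ᵥ x)) ⬝ᵥ B *ᵥ (s • x + s' • (B *ᵥ x)) =
        s^2 * (x ⬝ᵥ B *ᵥ x) + 2*s*s' * ((B *ᵥ x) ⬝ᵥ (B *ᵥ x))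
          + s'^2 * ((B *ᵥ x) ⬝ᵥ B *ᵥ (B *ᵥ x)) := by
      intro s s'
      simp only [mulVec_add, mulVec_smul, dotProduct_add, add_dotProduct,
        dotProduct_smul, smul_dotProduct, smul_eq_mul, hcross]
      ring
    have hexpI : ∀ s s' : ℝ, (s • x + s' • (B *ᵥ x)) ⬝ᵥ (s • x + s' • (B *ᵥ x)) =
        s^2 * (x ⬝ᵥ x) + 2*s*s' * (x ⬝ᵥ B *ᵥ x) + s'^2 * ((B *ᵥ x) ⬝ᵥ (B *ᵥ x)) := by
      intro s s'
      have : (B *ᵥ x) ⬝ᵥ x = x ⬝ᵥ B *ᵥ x := dotProduct_comm _ _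
      simp only [dotProduct_add, add_dotProduct, dotProduct_smul, smul_dotProduct,
        smul_eq_mul, this]
      ring
    have I1 := hQ1 (t • x + (1:ℝ) • (B *ᵥ x))
    have I2 := hQ2 (t • x + (-1:ℝ) • (B *ᵥ x))
    have I3 := hQ1 ((1:ℝ) • x + (1:ℝ) • (B *ᵥ x))
    have I4 := hQ2 ((1:ℝ) • x + (0:ℝ) • (B *ᵥ x))
    have I5 := hQ2 ((0:ℝ) • x + (1:ℝ) • (B *ᵥ x))
    rw [hexpB, hexpI] at I1 I2 I3 I4 I5
    have := arith_aux (t := t) (a := x ⬝ᵥ x) (b := (B *ᵥ x) ⬝ᵥ (B *ᵥ x))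
      (c := x ⬝ᵥ B *ᵥ x) (e := (B *ᵥ x) ⬝ᵥ B *ᵥ (B *ᵥ x)) ht
      (by nlinarith [I1]) (by nlinarith [I2]) (by nlinarith [I3])
      (by nlinarith [I4]) (by nlinarith [I5])
    linarith

end Aux

/-- if `D ≈_ε D̂`, `(D̂ - Â) ≈_ε (D - A D⁻¹ A)` and the largest eigenvalue of
`D⁻¹ A` is at most `1 - λ`, then the eigenvalues of `D̂⁻¹ Â` lie between `1 - exp(2ε)` and
`1 - (1 - (1-λ)²) exp(-2ε)`. -/
theorem stmt7 {n : ℕ} (d dh : Fin n → ℝ) (hd : ∀ i, 0 < d i) (hdh : ∀ i, 0 < dh i)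
    (D Dhat : Matrix (Fin n) (Fin n) ℝ)
    (hD : D = Matrix.diagonal d) (hDhat : Dhat = Matrix.diagonal dh)
    (A Ahat : Matrix (Fin n) (Fin n) ℝ)
    (hA : A.IsSymm) (hAnn : ∀ i j, 0 ≤ A i j)
    (hAhat : Ahat.IsSymm) (hAhatnn : ∀ i j, 0 ≤ Ahat i j)
    (hDA : (D - A).PosDef) (hDhatAhat : (Dhat - Ahat).PosDef)
    (ε lam : ℝ) (hε : 0 ≤ ε) (hlam0 : 0 ≤ lam) (hlam1 : lam ≤ 1)
    (happroxD : MApprox ε D Dhat)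
    (happroxM : MApprox ε (Dhat - Ahat) (D - A * D⁻¹ * A))
    (S Shat : Matrix (Fin n) (Fin n) ℝ)
    (hS : S = Matrix.diagonal fun i => (Real.sqrt (d i))⁻¹)
    (hShat : Shat = Matrix.diagonal fun i => (Real.sqrt (dh i))⁻¹)
    (hbound : ((1 - lam) • (1 : Matrix (Fin n) (Fin n) ℝ) - S * A * S).PosSemidef) :
    (Shat * Ahat * Shat -
        (1 - Real.exp (2 * ε)) • (1 : Matrix (Fin n) (Fin n) ℝ)).PosSemidef ∧
      ((1 - (1 - (1 - lam) ^ 2) * Real.exp (-(2 * ε))) • (1 : Matrix (Fin n) (Fin n) ℝ) -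
        Shat * Ahat * Shat).PosSemidef := by
  obtain ⟨hM1, hM2⟩ := happroxM
  obtain ⟨hD1, hD2⟩ := happroxD
  have hu : Real.exp ε ≠ 0 := Real.exp_ne_zero ε
  have hu0 : 0 ≤ Real.exp ε := (Real.exp_pos ε).le
  have hui0 : 0 ≤ (Real.exp ε)⁻¹ := inv_nonneg.mpr hu0
  have hme : Real.exp (-ε) = (Real.exp ε)⁻¹ := Real.exp_neg ε
  have h2e : Real.exp (2*ε) = Real.exp ε * Real.exp ε := by
    rw [← Real.exp_add]; ring_nf
  have hm2e : Real.exp (-(2*ε)) = (Real.exp ε)⁻¹ * (Real.exp ε)⁻¹ := by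
    rw [show -(2*ε) = -ε + -ε by ring, Real.exp_add, hme]
  rw [hme] at hM2 hD2
  rw [h2e, hm2e]
  -- the square-root diagonal matrix T with T * T = D
  set T : Matrix (Fin n) (Fin n) ℝ := Matrix.diagonal fun i => Real.sqrt (d i) with hT
  have hsd : ∀ i, 0 < Real.sqrt (d i) := fun i => Real.sqrt_pos.mpr (hd i)
  have hTS : T * S = 1 := by
    rw [hT, hS, Matrix.diagonal_mul_diagonal, ← Matrix.diagonal_one]
    exact congrArg Matrix.diagonal (funext fun i => mul_inv_cancel₀ (hsd i).ne')
  have hST : S * T = 1 := by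
    rw [hT, hS, Matrix.diagonal_mul_diagonal, ← Matrix.diagonal_one]
    exact congrArg Matrix.diagonal (funext fun i => inv_mul_cancel₀ (hsd i).ne')
  have hTT : T * T = D := by
    rw [hT, hD, Matrix.diagonal_mul_diagonal]
    exact congrArg Matrix.diagonal (funext fun i => Real.mul_self_sqrt (hd i).le)
  have hSS : S * S = Matrix.diagonal fun i => (d i)⁻¹ := by
    rw [hS, Matrix.diagonal_mul_diagonal]
    exact congrArg Matrix.diagonal (funext fun i => by
      rw [← mul_inv, Real.mul_self_sqrt (hd i).le])
  have hDinv : D⁻¹ = Matrix.diagonal fun i => (d i)⁻¹ := by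
    refine Matrix.inv_eq_right_inv ?_
    rw [hD, Matrix.diagonal_mul_diagonal, ← Matrix.diagonal_one]
    exact congrArg Matrix.diagonal (funext fun i => mul_inv_cancel₀ (hd i).ne')
  have hTH : Tᴴ = T := by rw [hT]; exact Matrix.diagonal_transpose _
  have hSHH : Shatᴴ = Shat := by rw [hShat]; exact Matrix.diagonal_transpose _
  have hSt : Sᵀ = S := by rw [hS]; exact Matrix.diagonal_transpose _
  have hSDS : Shat * Dhat * Shat = 1 := by
    rw [hShat, hDhat, Matrix.diagonal_mul_diagonal, Matrix.diagonal_mul_diagonal,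
      ← Matrix.diagonal_one]
    refine congrArg Matrix.diagonal (funext fun i => ?_)
    have hs := Real.mul_self_sqrt (hdh i).le
    have hne := (Real.sqrt_pos.mpr (hdh i)).ne'
    rw [← hs]
    field_simp
    rw [Real.sqrt_sq (Real.sqrt_nonneg _)]
  -- A * D⁻¹ * A is PSD
  have hDinvPSD : (D⁻¹).PosSemidef := by
    rw [hDinv]
    exact Matrix.PosSemidef.diagonal fun i => inv_nonneg.mpr (hd i).le
  have hADA : (A * D⁻¹ * A).PosSemidef := by
    have := hDinvPSD.mul_mul_conjTranspose_same A
    rwa [show Aᴴ = A from hA] at this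
  -- the key estimate : D - A D⁻¹ A ⪰ (1 - (1-lam)²) D
  have hBsym : (S * A * S)ᵀ = S * A * S := by
    rw [Matrix.transpose_mul, Matrix.transpose_mul, hSt, hA, Matrix.mul_assoc]
  have hBnn : ∀ i j, 0 ≤ (S * A * S) i j := by
    intro i j
    rw [hS, Matrix.mul_diagonal, Matrix.diagonal_mul]
    have := hAnn i j
    positivity
  have ht0 : (0:ℝ) ≤ 1 - lam := by linarith
  have hb2 := neg_psd hBsym hBnn hbound
  have hsq := sq_psd hBsym ht0 hbound hb2
  have hkey : ((D - A * D⁻¹ * A) - (1 - (1 - lam)^2) • D).PosSemidef := by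
    have hconj := hsq.mul_mul_conjTranspose_same T
    rw [hTH] at hconj
    have e1 : T * ((S * A * S) * (S * A * S)) * T = A * D⁻¹ * A := by
      rw [hDinv, ← hSS]
      simp only [Matrix.mul_assoc, hST, Matrix.mul_one]
      rw [← Matrix.mul_assoc T S, hTS, Matrix.one_mul]
    have heq : T * (((1 - lam)^2) • (1 : Matrix (Fin n) (Fin n) ℝ) - (S*A*S) * (S*A*S)) * T
        = (D - A * D⁻¹ * A) - (1 - (1 - lam)^2) • D := by
      rw [Matrix.mul_sub, Matrix.sub_mul, Matrix.mul_smul, Matrix.smul_mul, Matrix.mul_one,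
        e1, hTT]
      module
    rwa [heq] at hconj
  have hc0 : (0:ℝ) ≤ 1 - (1 - lam)^2 := by nlinarith
  -- PART 1 : lower bound
  have h1 : (Ahat - (1 - Real.exp ε * Real.exp ε) • Dhat).PosSemidef := by
    have p1 := psd_smul hu0 (hM2.add hADA)
    have p2 := psd_smul hu0 (psd_smul hu0 hD2)
    have := p1.add p2
    have heq : Real.exp ε • ((D - A * D⁻¹ * A) - (Real.exp ε)⁻¹ • (Dhat - Ahat) + A * D⁻¹ * A)
        + Real.exp ε • (Real.exp ε • (Dhat - (Real.exp ε)⁻¹ • D))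
        = Ahat - (1 - Real.exp ε * Real.exp ε) • Dhat := by
      match_scalars <;> field_simp <;> ring
    rwa [heq] at this
  have hfin1 : (Shat * (Ahat - (1 - Real.exp ε * Real.exp ε) • Dhat) * Shat).PosSemidef := by
    have := h1.mul_mul_conjTranspose_same Shat
    rwa [hSHH] at this
  have hg1 : Shat * (Ahat - (1 - Real.exp ε * Real.exp ε) • Dhat) * Shat
      = Shat * Ahat * Shat - (1 - Real.exp ε * Real.exp ε) • (1 : Matrix (Fin n) (Fin n) ℝ) := by
    rw [Matrix.mul_sub, Matrix.sub_mul, Matrix.mul_smul, Matrix.smul_mul, hSDS]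
  -- PART 2 : upper bound
  have h2 : ((Dhat - Ahat)
      - ((1 - (1 - lam)^2) * ((Real.exp ε)⁻¹ * (Real.exp ε)⁻¹)) • Dhat).PosSemidef := by
    have b1 := psd_smul hui0 hM1
    have b2 := psd_smul hui0 hkey
    have b3 := psd_smul (mul_nonneg hc0 hui0) (psd_smul hui0 hD1)
    have := (b1.add b2).add b3
    have heq : ((Real.exp ε)⁻¹ • (Real.exp ε • (Dhat - Ahat) - (D - A * D⁻¹ * A))
        + (Real.exp ε)⁻¹ • ((D - A * D⁻¹ * A) - (1 - (1 - lam)^2) • D))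
        + ((1 - (1 - lam)^2) * (Real.exp ε)⁻¹) • ((Real.exp ε)⁻¹ • (Real.exp ε • D - Dhat))
        = (Dhat - Ahat)
          - ((1 - (1 - lam)^2) * ((Real.exp ε)⁻¹ * (Real.exp ε)⁻¹)) • Dhat := by
      match_scalars <;> field_simp <;> ring
    rwa [heq] at this
  have hfin2 := h2.mul_mul_conjTranspose_same Shat
  rw [hSHH] at hfin2
  have hg2 : Shat * ((Dhat - Ahat)
        - ((1 - (1 - lam)^2) * ((Real.exp ε)⁻¹ * (Real.exp ε)⁻¹)) • Dhat) * Shat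
      = (1 - (1 - (1 - lam) ^ 2) * ((Real.exp ε)⁻¹ * (Real.exp ε)⁻¹)) •
          (1 : Matrix (Fin n) (Fin n) ℝ) - Shat * Ahat * Shat := by
    rw [Matrix.mul_sub, Matrix.sub_mul, Matrix.mul_smul, Matrix.smul_mul, Matrix.mul_sub,
      Matrix.sub_mul, hSDS]
    module
  constructor
  · rw [← hg1]; exact hfin1
  · rw [← hg2]; exact hfin2
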